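/- For every μ ∈ M_1(Δ), one has the identity I_V(μ) = I_𝒱(T_*μ). -/

import Mathlib

open MeasureTheory Filter Topology
open scoped ENNReal NNReal

/-- `⊤`-aware positive part of an extended real, as a value in `ℝ≥0∞`. -/
noncomputable def EReal.posPart' (x : EReal) : ℝ≥0∞ :=
  if x = ⊤ then ⊤ else ENNReal.ofReal x.toReal

/-- Integral of an `EReal`-valued function: positive part minus negative part. -/
noncomputable def eIntegral {α : Type*} [MeasurableSpace α] (μ : Measure α) (f : α → EReal) :
    EReal :=
  ((∫⁻ x, (f x).posPart' ∂μ : ℝ≥0∞) : EReal) - ((∫⁻ x, (-(f x)).posPart' ∂μ : ℝ≥0∞) : EReal)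

/-- `log (1/r)` as an extended real, equal to `+∞` at `r = 0`. -/
noncomputable def negLog (r : ℝ) : EReal :=
  if r = 0 then ⊤ else ((- Real.log r : ℝ) : EReal)

/-- The weighted logarithmic kernel `F_W(x,y) = (β/2) log(1/|x-y|) + W(x)/2 + W(y)/2`. -/
noncomputable def kern {α : Type*} [PseudoMetricSpace α] (β : ℝ) (W : α → EReal) (x y : α) :
    EReal :=
  ((β / 2 : ℝ) : EReal) * negLog (dist x y) + ((2⁻¹ : ℝ) : EReal) * W x
    + ((2⁻¹ : ℝ) : EReal) * W y

/-- The weighted logarithmic energy `I_W(μ) = ∬ F_W(x,y) dμ(x) dμ(y)`. -/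
noncomputable def energy {α : Type*} [MeasurableSpace α] [PseudoMetricSpace α] (β : ℝ)
    (W : α → EReal) (μ : Measure α) : EReal :=
  eIntegral (μ.prod μ) (fun p => kern β W p.1 p.2)

/-- The set of (Borel) probability measures carried by the closed set `Δ`,
i.e. `M_1(Δ)` viewed inside the probability measures on the ambient space. -/
def M1 {α : Type*} [MeasurableSpace α] [TopologicalSpace α]
    (Δ : Set α) : Set (ProbabilityMeasure α) :=
  {μ | (μ : Measure α) Δᶜ = 0}

/-- The filter `|x| → ∞, x ∈ Δ`. -/
noncomputable def atComplexInftyWithin (Δ : Set ℂ) : Filter ℂ :=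
  (Filter.comap (fun x : ℂ => ‖x‖) Filter.atTop) ⊓ Filter.principal Δ

/-- The weak growth assumption : `liminf_{|x| → ∞, x ∈ Δ} (V(x) - β' log |x|) > -∞`
for some `β' > 1` with `β' ≥ β`. -/
def WeakGrowth (β : ℝ) (Δ : Set ℂ) (V : ℂ → ℝ) : Prop :=
  ∃ β' : ℝ, 1 < β' ∧ β ≤ β' ∧
    (⊥ : EReal) <
      Filter.liminf (fun x : ℂ => ((V x - β' * Real.log (‖x‖) : ℝ) : EReal))
        (atComplexInftyWithin Δ)

/-- The inverse stereographic projection from `ℂ` onto the Riemann sphere `S ⊂ ℝ³`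
(the sphere of radius `1/2` centered at `(0,0,1/2)`). -/
noncomputable def Tst (x : ℂ) : EuclideanSpace ℝ (Fin 3) :=
  (EuclideanSpace.equiv (Fin 3) ℝ).symm
    ![x.re / (1 + ‖x‖ ^ 2), x.im / (1 + ‖x‖ ^ 2),
      ‖x‖ ^ 2 / (1 + ‖x‖ ^ 2)]

/-- The north pole `∞ = (0,0,1)` of the Riemann sphere. -/
noncomputable def sInfty : EuclideanSpace ℝ (Fin 3) :=
  (EuclideanSpace.equiv (Fin 3) ℝ).symm ![0, 0, 1]

lemma continuous_Tst : Continuous Tst := by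
  refine ((EuclideanSpace.equiv (Fin 3) ℝ).symm.continuous).comp ?_
  have h : Continuous fun x : ℂ => 1 + ‖x‖ ^ 2 :=
    continuous_const.add (continuous_norm.pow 2)
  have hne : ∀ x : ℂ, 1 + ‖x‖ ^ 2 ≠ 0 := fun x => by positivity
  refine continuous_pi fun i => ?_
  fin_cases i
  · simp; exact Complex.continuous_re.div h hne
  · simp; exact Complex.continuous_im.div h hne
  · simp; exact (continuous_norm.pow 2).div h hne

/-- Push-forward of a probability measure by the inverse stereographic projection `T`. -/
noncomputable def pushT (μ : ProbabilityMeasure ℂ) :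
    ProbabilityMeasure (EuclideanSpace ℝ (Fin 3)) :=
  μ.map continuous_Tst.measurable.aemeasurable

/-- `Δ_S`, the closure in the sphere of the image of `Δ` by `T`. -/
noncomputable def deltaS (Δ : Set ℂ) : Set (EuclideanSpace ℝ (Fin 3)) :=
  closure (Tst '' Δ)

/-- The weak growth assumption for an extended-real-valued potential:
`liminf_{|x| → ∞, x ∈ Δ} (V(x) - β' log |x|) > -∞` for some `β' > 1` with `β' ≥ β`. -/
def WeakGrowthE (β : ℝ) (Δ : Set ℂ) (V : ℂ → EReal) : Prop :=
  ∃ β' : ℝ, 1 < β' ∧ β ≤ β' ∧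
    (⊥ : EReal) <
      Filter.liminf
        (fun x : ℂ => V x - ((β' * Real.log (‖x‖) : ℝ) : EReal))
        (atComplexInftyWithin Δ)

/-- The defining property of the potential `𝒱` on the sphere built from `V`:
`𝒱(T x) = V(x) - (β/2) log (1+|x|²)` on `Δ` and
`𝒱(∞) = liminf_{|x|→∞, x ∈ Δ} (V(x) - (β/2) log (1+|x|²))`. -/
def IsSpherePotential (β : ℝ) (Δ : Set ℂ) (V : ℂ → EReal)
    (𝒱 : EuclideanSpace ℝ (Fin 3) → EReal) : Prop :=
  (∀ x ∈ Δ, 𝒱 (Tst x) =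
      V x - ((β / 2 * Real.log (1 + ‖x‖ ^ 2) : ℝ) : EReal)) ∧
    𝒱 sInfty =
      Filter.liminf
        (fun x : ℂ => V x - ((β / 2 * Real.log (1 + ‖x‖ ^ 2) : ℝ) : EReal))
        (atComplexInftyWithin Δ)


section Aux

lemma measurable_posPart' : Measurable EReal.posPart' := by
  unfold EReal.posPart'
  exact Measurable.ite (measurableSet_singleton ⊤) measurable_const
    measurable_ereal_toReal.ennreal_ofReal

lemma ereal_add_def (x y : EReal) :
    x + y = if x = ⊥ ∨ y = ⊥ then ⊥ else if x = ⊤ ∨ y = ⊤ then ⊤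
      else ((x.toReal + y.toReal : ℝ) : EReal) := by
  induction x <;> induction y <;> simp [EReal.top_add_coe, EReal.coe_add_top, ← EReal.coe_add]

lemma measurable_ereal_add :
    Measurable fun p : EReal × EReal => p.1 + p.2 := by
  simp only [ereal_add_def]
  apply Measurable.ite
  · exact ((measurable_fst (measurableSet_singleton ⊥))).union
      ((measurable_snd (measurableSet_singleton ⊥)))
  · exact measurable_const
  apply Measurable.ite
  · exact ((measurable_fst (measurableSet_singleton ⊤))).union
      ((measurable_snd (measurableSet_singleton ⊤)))
  · exact measurable_const
  · exact ((measurable_fst.ereal_toReal).add measurable_snd.ereal_toReal).coe_real_ereal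

lemma AEMeasurable.ereal_add {α : Type*} [MeasurableSpace α] {μ : MeasureTheory.Measure α}
    {f g : α → EReal} (hf : AEMeasurable f μ) (hg : AEMeasurable g μ) :
    AEMeasurable (fun a => f a + g a) μ :=
  measurable_ereal_add.comp_aemeasurable (hf.prodMk hg)

lemma continuous_ereal_const_mul {c : ℝ} (hc : c ≠ 0) :
    Continuous fun x : EReal => (c : EReal) * x := by
  rw [continuous_iff_continuousAt]
  intro x
  have h : ContinuousAt (fun p : EReal × EReal => p.1 * p.2) ((c : EReal), x) :=
    EReal.continuousAt_mul (Or.inl (by simp [hc])) (Or.inl (by simp [hc]))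
      (Or.inl (by simp [hc])) (Or.inl (by simp))
  exact h.comp (Continuous.continuousAt (by fun_prop))

lemma measurable_negLog : Measurable negLog := by
  unfold negLog
  exact Measurable.ite (measurableSet_singleton 0) measurable_const
    Real.measurable_log.neg.coe_real_ereal

lemma negLog_ne_bot (r : ℝ) : negLog r ≠ ⊥ := by
  unfold negLog; split <;> simp

lemma negLog_div {s : ℝ} (r : ℝ) (hs : 0 < s) :
    negLog (r / s) = negLog r + ((Real.log s : ℝ) : EReal) := by
  unfold negLog
  rcases eq_or_ne r 0 with rfl | hr
  · simp
  · rw [if_neg (div_ne_zero hr hs.ne'), if_neg hr, ← EReal.coe_add,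
      Real.log_div hr hs.ne']
    norm_cast
    ring

lemma key_alg {β : ℝ} (hβ : 0 < β) (La Lb : ℝ) {N u v : EReal}
    (hN : N ≠ ⊥) (hu : u ≠ ⊥) (hv : v ≠ ⊥) :
    ((β / 2 : ℝ) : EReal) * (N + ((La / 2 + Lb / 2 : ℝ) : EReal))
      + ((2⁻¹ : ℝ) : EReal) * (u - ((β / 2 * La : ℝ) : EReal))
      + ((2⁻¹ : ℝ) : EReal) * (v - ((β / 2 * Lb : ℝ) : EReal))
    = ((β / 2 : ℝ) : EReal) * N + ((2⁻¹ : ℝ) : EReal) * u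
      + ((2⁻¹ : ℝ) : EReal) * v := by
  have hβ2 : (0 : ℝ) < β / 2 := by linarith
  have hh : (0 : ℝ) < (2⁻¹ : ℝ) := by norm_num
  induction N <;> induction u <;> induction v <;>
    first
      | exact absurd rfl hN
      | exact absurd rfl hu
      | exact absurd rfl hv
      | (simp only [← EReal.coe_mul, ← EReal.coe_add, ← EReal.coe_sub,
          EReal.top_sub_coe, EReal.top_add_coe, EReal.coe_add_top, EReal.top_add_top,
          EReal.coe_mul_top_of_pos hβ2, EReal.coe_mul_top_of_pos hh]
         try norm_cast
         try ring)

noncomputable def Tinv (p : EuclideanSpace ℝ (Fin 3)) : ℂ :=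
  Complex.mk (p 0 / (1 - p 2)) (p 1 / (1 - p 2))

lemma measurable_Tinv : Measurable Tinv := by
  have h : ∀ i : Fin 3, Measurable fun p : EuclideanSpace ℝ (Fin 3) => p i := by
    intro i
    exact (continuous_apply i).comp (PiLp.continuous_ofLp 2 (fun _ : Fin 3 => ℝ))
      |>.measurable
  have : Tinv = fun p => Complex.ofReal (p 0 / (1 - p 2))
      + Complex.ofReal (p 1 / (1 - p 2)) * Complex.I := by
    funext p
    apply Complex.ext <;> simp [Tinv, -Complex.ofReal_div]
  rw [this]
  exact ((Complex.measurable_ofReal.comp ((h 0).div (measurable_const.sub (h 2)))).add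
    ((Complex.measurable_ofReal.comp ((h 1).div (measurable_const.sub (h 2)))).mul_const _))

lemma one_add_sq_pos (x : ℂ) : (0:ℝ) < 1 + ‖x‖ ^ 2 := by positivity

lemma Tst_apply (x : ℂ) :
    Tst x 0 = x.re / (1 + ‖x‖ ^ 2) ∧
    Tst x 1 = x.im / (1 + ‖x‖ ^ 2) ∧
    Tst x 2 = ‖x‖ ^ 2 / (1 + ‖x‖ ^ 2) := by
  refine ⟨rfl, rfl, rfl⟩

lemma Tinv_Tst (x : ℂ) : Tinv (Tst x) = x := by
  have h := one_add_sq_pos x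
  apply Complex.ext <;>
  · show _ / (1 - ‖x‖ ^ 2 / (1 + ‖x‖ ^ 2)) = _
    rw [show (1 : ℝ) - ‖x‖ ^ 2 / (1 + ‖x‖ ^ 2)
        = 1 / (1 + ‖x‖ ^ 2) by field_simp; ring]
    simp only [(Tst_apply x).1, (Tst_apply x).2.1]
    field_simp

lemma dist_Tst (x y : ℂ) :
    dist (Tst x) (Tst y) =
      dist x y / (Real.sqrt (1 + ‖x‖ ^ 2) * Real.sqrt (1 + ‖y‖ ^ 2)) := by
  have hx := one_add_sq_pos x
  have hy := one_add_sq_pos y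
  have hax : ‖x‖ ^ 2 = x.re ^ 2 + x.im ^ 2 := by
    rw [Complex.sq_norm, Complex.normSq_apply]; ring
  have hay : ‖y‖ ^ 2 = y.re ^ 2 + y.im ^ 2 := by
    rw [Complex.sq_norm, Complex.normSq_apply]; ring
  have hd : dist x y ^ 2 = (x.re - y.re) ^ 2 + (x.im - y.im) ^ 2 := by
    rw [Complex.dist_eq, Complex.sq_norm, Complex.normSq_apply, Complex.sub_re,
      Complex.sub_im]; ring
  rw [EuclideanSpace.dist_eq, Fin.sum_univ_three]
  have key : dist (Tst x 0) (Tst y 0) ^ 2 + dist (Tst x 1) (Tst y 1) ^ 2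
      + dist (Tst x 2) (Tst y 2) ^ 2
      = (dist x y / (Real.sqrt (1 + ‖x‖ ^ 2)
          * Real.sqrt (1 + ‖y‖ ^ 2))) ^ 2 := by
    rw [div_pow, mul_pow, Real.sq_sqrt hx.le, Real.sq_sqrt hy.le, hd]
    simp only [(Tst_apply x).1, (Tst_apply x).2.1, (Tst_apply x).2.2,
      (Tst_apply y).1, (Tst_apply y).2.1, (Tst_apply y).2.2, Real.dist_eq]
    rw [sq_abs, sq_abs, sq_abs, hax, hay]
    have hx' : (0:ℝ) < 1 + (x.re ^ 2 + x.im ^ 2) := by positivity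
    have hy' : (0:ℝ) < 1 + (y.re ^ 2 + y.im ^ 2) := by positivity
    field_simp
    ring
  rw [key, Real.sqrt_sq (div_nonneg dist_nonneg (by positivity))]

lemma kern_Tst {β : ℝ} (hβ : 0 < β) {Δ : Set ℂ} {V : ℂ → EReal}
    {𝒱 : EuclideanSpace ℝ (Fin 3) → EReal} (hVbot : ∀ x ∈ Δ, V x ≠ ⊥)
    (h𝒱 : IsSpherePotential β Δ V 𝒱) {x y : ℂ} (hx : x ∈ Δ) (hy : y ∈ Δ) :
    kern β 𝒱 (Tst x) (Tst y) = kern β V x y := by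
  have hx' := one_add_sq_pos x
  have hy' := one_add_sq_pos y
  have hsx : 0 < Real.sqrt (1 + ‖x‖ ^ 2) := Real.sqrt_pos.2 hx'
  have hsy : 0 < Real.sqrt (1 + ‖y‖ ^ 2) := Real.sqrt_pos.2 hy'
  unfold kern
  rw [dist_Tst, negLog_div _ (mul_pos hsx hsy), h𝒱.1 x hx, h𝒱.1 y hy,
    Real.log_mul hsx.ne' hsy.ne', Real.log_sqrt hx'.le, Real.log_sqrt hy'.le]
  exact key_alg hβ _ _ (negLog_ne_bot _) (hVbot x hx) (hVbot y hy)

open scoped Classical in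
lemma lowerSemicontinuous_extend {V : ℂ → EReal} {Δ : Set ℂ} (hΔ : IsClosed Δ)
    (h : LowerSemicontinuousOn V Δ) :
    LowerSemicontinuous (fun x => if x ∈ Δ then V x else (⊤ : EReal)) := by
  intro x a ha
  change a < (if x ∈ Δ then V x else ⊤) at ha
  by_cases hx : x ∈ Δ
  · rw [if_pos hx] at ha
    have h1 : ∀ᶠ y in 𝓝[Δ] x, a < if y ∈ Δ then V y else ⊤ := by
      filter_upwards [h x hx a ha, self_mem_nhdsWithin] with y hy hyΔ
      rwa [if_pos hyΔ]
    have h2 : ∀ᶠ y in 𝓝[Δᶜ] x, a < if y ∈ Δ then V y else ⊤ := by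
      filter_upwards [self_mem_nhdsWithin] with y hy
      rw [if_neg hy]
      exact lt_of_lt_of_le ha le_top
    have : 𝓝 x = 𝓝[Δ] x ⊔ 𝓝[Δᶜ] x := by
      rw [← nhdsWithin_univ, ← Set.union_compl_self Δ, nhdsWithin_union]
    rw [this]
    exact Filter.eventually_sup.2 ⟨h1, h2⟩
  · rw [if_neg hx] at ha
    filter_upwards [hΔ.isOpen_compl.mem_nhds hx] with y hy
    show a < (if y ∈ Δ then V y else ⊤)
    rw [if_neg hy]
    exact ha

lemma measurableSet_Tst_image {Δ : Set ℂ} (hΔ : IsClosed Δ) : MeasurableSet (Tst '' Δ) := by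
  have himg : Tst '' Δ = ⋃ n : ℕ, Tst '' (Δ ∩ Metric.closedBall 0 n) := by
    ext z
    simp only [Set.mem_iUnion, Set.mem_image]
    constructor
    · rintro ⟨x, hx, rfl⟩
      obtain ⟨n, hn⟩ := exists_nat_ge (‖x‖)
      exact ⟨n, x, ⟨hx, by simpa [Metric.mem_closedBall, Complex.dist_eq] using hn⟩, rfl⟩
    · rintro ⟨n, x, ⟨hx, _⟩, rfl⟩
      exact ⟨x, hx, rfl⟩
  rw [himg]
  refine MeasurableSet.iUnion fun n => ?_
  exact (((isCompact_closedBall (0:ℂ) n).inter_left hΔ).image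
    continuous_Tst).isClosed.measurableSet

end Aux

theorem energy_pushforward_eq (β : ℝ) (hβ : 0 < β) (Δ : Set ℂ) (hΔclosed : IsClosed Δ)
    (hΔunbounded : ¬ Bornology.IsBounded Δ)
    (V : ℂ → EReal) (hVbot : ∀ x ∈ Δ, V x ≠ ⊥) (hVlsc : LowerSemicontinuousOn V Δ)
    (hgrowth : WeakGrowthE β Δ V)
    (𝒱 : EuclideanSpace ℝ (Fin 3) → EReal) (h𝒱 : IsSpherePotential β Δ V 𝒱)
    (μ : ProbabilityMeasure ℂ) (hμ : μ ∈ M1 Δ) :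
    energy β V (μ : Measure ℂ) =
      energy β 𝒱 (pushT μ : Measure (EuclideanSpace ℝ (Fin 3))) := by
  classical
  have hT : Measurable Tst := continuous_Tst.measurable
  have hμΔ : (μ : Measure ℂ) Δᶜ = 0 := hμ
  have hcoe : (pushT μ : Measure (EuclideanSpace ℝ (Fin 3))) = (μ : Measure ℂ).map Tst := by
    simp [pushT]
  set π : Measure (ℂ × ℂ) := (μ : Measure ℂ).prod (μ : Measure ℂ) with hπdef
  set ν : Measure (EuclideanSpace ℝ (Fin 3)) := (μ : Measure ℂ).map Tst with hν
  haveI : IsProbabilityMeasure ν := Measure.isProbabilityMeasure_map hT.aemeasurable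
  -- the measurable extension of `V`
  set V' : ℂ → EReal := fun x => if x ∈ Δ then V x else ⊤ with hV'
  have hV'm : Measurable V' := (lowerSemicontinuous_extend hΔclosed hVlsc).measurable
  set S : Set (EuclideanSpace ℝ (Fin 3)) := Tst '' Δ with hS
  have hSm : MeasurableSet S := measurableSet_Tst_image hΔclosed
  -- `𝒱` is a.e. measurable for `ν`
  set g : EuclideanSpace ℝ (Fin 3) → EReal := fun z =>
    if z ∈ S then
      V' (Tinv z) - ((β / 2 * Real.log (1 + ‖Tinv z‖ ^ 2) : ℝ) : EReal)
    else 0 with hg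
  have hsubm : Measurable fun z : EuclideanSpace ℝ (Fin 3) => V' (Tinv z)
      - ((β / 2 * Real.log (1 + ‖Tinv z‖ ^ 2) : ℝ) : EReal) := by
    have h1 : Measurable fun z : EuclideanSpace ℝ (Fin 3) => V' (Tinv z) :=
      hV'm.comp measurable_Tinv
    have h2 : Measurable fun z : EuclideanSpace ℝ (Fin 3) =>
        ((β / 2 * Real.log (1 + ‖Tinv z‖ ^ 2) : ℝ) : EReal) :=
      (measurable_const.mul (Real.measurable_log.comp
        (measurable_const.add
          ((measurable_Tinv.norm).pow_const 2)))).coe_real_ereal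
    have h3 : Measurable fun z : EuclideanSpace ℝ (Fin 3) =>
        -(((β / 2 * Real.log (1 + ‖Tinv z‖ ^ 2) : ℝ) : EReal)) :=
      continuous_neg.measurable.comp h2
    have heq : (fun z : EuclideanSpace ℝ (Fin 3) => V' (Tinv z)
        - ((β / 2 * Real.log (1 + ‖Tinv z‖ ^ 2) : ℝ) : EReal))
        = fun z => V' (Tinv z)
          + (-(((β / 2 * Real.log (1 + ‖Tinv z‖ ^ 2) : ℝ) : EReal))) :=
      funext fun z => sub_eq_add_neg _ _
    rw [heq]
    exact measurable_ereal_add.comp (h1.prodMk h3)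
  have hgm : Measurable g := Measurable.ite hSm hsubm measurable_const
  have hScompl : ν Sᶜ = 0 := by
    rw [hν, Measure.map_apply hT hSm.compl]
    refine measure_mono_null ?_ hμΔ
    intro x hx hxΔ
    exact hx (Set.mem_image_of_mem _ hxΔ)
  have h𝒱ae : AEMeasurable 𝒱 ν := by
    refine ⟨g, hgm, ?_⟩
    have hmemae : ∀ᵐ z ∂ν, z ∈ S := by
      rw [ae_iff]
      exact hScompl
    filter_upwards [hmemae] with z hz
    obtain ⟨x, hxΔ, rfl⟩ := hz
    have hmem : Tst x ∈ S := Set.mem_image_of_mem _ hxΔ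
    simp only [hg, if_pos hmem, Tinv_Tst, hV', if_pos hxΔ]
    exact h𝒱.1 x hxΔ
  -- a.e. measurability of the spherical kernel
  have hkm : AEMeasurable
      (fun p : EuclideanSpace ℝ (Fin 3) × EuclideanSpace ℝ (Fin 3) => kern β 𝒱 p.1 p.2)
      (ν.prod ν) := by
    have hβ2 : (β / 2 : ℝ) ≠ 0 := by positivity
    have m1 : Measurable fun p : EuclideanSpace ℝ (Fin 3) × EuclideanSpace ℝ (Fin 3) =>
        ((β / 2 : ℝ) : EReal) * negLog (dist p.1 p.2) :=
      (continuous_ereal_const_mul hβ2).measurable.comp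
        (measurable_negLog.comp continuous_dist.measurable)
    have a1 : AEMeasurable
        (fun p : EuclideanSpace ℝ (Fin 3) × EuclideanSpace ℝ (Fin 3) => 𝒱 p.1) (ν.prod ν) :=
      h𝒱ae.comp_quasiMeasurePreserving Measure.quasiMeasurePreserving_fst
    have a2 : AEMeasurable
        (fun p : EuclideanSpace ℝ (Fin 3) × EuclideanSpace ℝ (Fin 3) => 𝒱 p.2) (ν.prod ν) :=
      h𝒱ae.comp_quasiMeasurePreserving Measure.quasiMeasurePreserving_snd
    have c2 : Measurable fun x : EReal => ((2⁻¹ : ℝ) : EReal) * x :=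
      (continuous_ereal_const_mul (by norm_num)).measurable
    simp only [kern]
    exact (m1.aemeasurable.ereal_add (c2.comp_aemeasurable a1)).ereal_add
      (c2.comp_aemeasurable a2)
  have hnkm : AEMeasurable
      (fun p : EuclideanSpace ℝ (Fin 3) × EuclideanSpace ℝ (Fin 3) =>
        -(kern β 𝒱 p.1 p.2)) (ν.prod ν) :=
    continuous_neg.measurable.comp_aemeasurable hkm
  -- rewriting the product measure as a pushforward
  have hmap : ν.prod ν = Measure.map (Prod.map Tst Tst) π := Measure.map_prod_map _ _ hT hT
  have hT2 : Measurable (Prod.map Tst Tst) := hT.prodMap hT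
  -- the product measure is carried by `Δ × Δ`
  have hae1 : ∀ᵐ p ∂π, p.1 ∈ Δ := by
    rw [ae_iff]
    have h : {p : ℂ × ℂ | ¬ p.1 ∈ Δ} = Δᶜ ×ˢ (Set.univ : Set ℂ) := by ext p; simp
    rw [h, hπdef, Measure.prod_prod, hμΔ, zero_mul]
  have hae2 : ∀ᵐ p ∂π, p.2 ∈ Δ := by
    rw [ae_iff]
    have h : {p : ℂ × ℂ | ¬ p.2 ∈ Δ} = (Set.univ : Set ℂ) ×ˢ Δᶜ := by ext p; simp
    rw [h, hπdef, Measure.prod_prod, hμΔ, mul_zero]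
  have hkern_ae : ∀ᵐ p ∂π, kern β 𝒱 (Tst p.1) (Tst p.2) = kern β V p.1 p.2 := by
    filter_upwards [hae1, hae2] with p h1 h2
    exact kern_Tst hβ hVbot h𝒱 h1 h2
  -- the two halves of the energy identity
  have e1 : (∫⁻ p, (kern β 𝒱 p.1 p.2).posPart' ∂(ν.prod ν))
      = ∫⁻ p, (kern β V p.1 p.2).posPart' ∂π := by
    have hf : AEMeasurable
        (fun p : EuclideanSpace ℝ (Fin 3) × EuclideanSpace ℝ (Fin 3) =>
          (kern β 𝒱 p.1 p.2).posPart') (Measure.map (Prod.map Tst Tst) π) := by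
      rw [← hmap]
      exact measurable_posPart'.comp_aemeasurable hkm
    rw [hmap, lintegral_map' hf hT2.aemeasurable]
    refine lintegral_congr_ae ?_
    filter_upwards [hkern_ae] with p hp
    show ((kern β 𝒱 (Prod.map Tst Tst p).1 (Prod.map Tst Tst p).2).posPart') = _
    rw [Prod.map_fst, Prod.map_snd, hp]
  have e2 : (∫⁻ p, (-(kern β 𝒱 p.1 p.2)).posPart' ∂(ν.prod ν))
      = ∫⁻ p, (-(kern β V p.1 p.2)).posPart' ∂π := by
    have hf : AEMeasurable
        (fun p : EuclideanSpace ℝ (Fin 3) × EuclideanSpace ℝ (Fin 3) =>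
          (-(kern β 𝒱 p.1 p.2)).posPart') (Measure.map (Prod.map Tst Tst) π) := by
      rw [← hmap]
      exact measurable_posPart'.comp_aemeasurable hnkm
    rw [hmap, lintegral_map' hf hT2.aemeasurable]
    refine lintegral_congr_ae ?_
    filter_upwards [hkern_ae] with p hp
    show ((-(kern β 𝒱 (Prod.map Tst Tst p).1 (Prod.map Tst Tst p).2)).posPart') = _
    rw [Prod.map_fst, Prod.map_snd, hp]
  rw [energy, energy, hcoe]
  show eIntegral π (fun p => kern β V p.1 p.2) = eIntegral (ν.prod ν) fun p => kern β 𝒱 p.1 p.2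
  rw [eIntegral, eIntegral, e1, e2]
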